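/- arXiv:2210.16189 — 4 statements merged into one kernel-verified Lean document; each statement's English description precedes it below -/
import Mathlib

section
/- Let N ≥ 1, n ≥ 1 be integers, let p : Fin N → ℝ be a probability vector with p i > 0 for all i and ∑ i, p i = 1, and let I₁, …, I_n be i.i.d. random indices with P(I_k = i) = p i. Then for any vectors v : Fin N → ℝ^d, letting g = ∑_i v(i) and g̃ = (1/n) ∑_{k=1}^n (1/p(I_k)) • v(I_k), the pseudo-variance satisfies E[ ‖g̃ − g‖² ] = (1/n) ( ∑_i ‖v(i)‖²/p(i) − ‖∑_i v(i)‖² ). -/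
open MeasureTheory ProbabilityTheory

/-- Pseudo-variance of the preferentially subsampled (importance-weighted)
gradient estimator built from `n` i.i.d. indices drawn with replacement. -/
theorem pseudoVariance_preferential_subsampling
    {N n d : ℕ} (hN : 1 ≤ N) (hn : 1 ≤ n)
    {Ω : Type*} [MeasurableSpace Ω] (μ : Measure Ω) [IsProbabilityMeasure μ]
    (I : Fin n → Ω → Fin N)
    (hmeas : ∀ k, Measurable (I k))
    (hindep : iIndepFun I μ)
    (p : Fin N → ℝ) (hp : ∀ i, 0 < p i) (hsum : ∑ i, p i = 1)
    (hlaw : ∀ k i, μ (I k ⁻¹' {i}) = ENNReal.ofReal (p i))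
    (v : Fin N → EuclideanSpace ℝ (Fin d)) :
    ∫ ω, ‖(1 / (n : ℝ)) • (∑ k, (p (I k ω))⁻¹ • v (I k ω)) - ∑ i, v i‖ ^ 2 ∂μ
      = (1 / (n : ℝ)) * ((∑ i, ‖v i‖ ^ 2 / p i) - ‖∑ i, v i‖ ^ 2) := by
  classical
  have hnR : (n : ℝ) ≠ 0 := Nat.cast_ne_zero.mpr (by omega)
  set g : EuclideanSpace ℝ (Fin d) := ∑ i, v i with hgdef
  set c : ℝ := 1 / (n : ℝ) with hcdef
  set X : Fin n → Ω → EuclideanSpace ℝ (Fin d) :=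
    fun k ω => (p (I k ω))⁻¹ • v (I k ω) with hXdef
  -- law of a single index
  have hsingle : ∀ (k : Fin n) (F : Fin N → ℝ),
      ∫ ω, F (I k ω) ∂μ = ∑ i, p i * F i := by
    intro k F
    haveI : IsProbabilityMeasure (μ.map (I k)) :=
      Measure.isProbabilityMeasure_map (hmeas k).aemeasurable
    rw [← integral_map (hmeas k).aemeasurable
      (measurable_of_countable F).aestronglyMeasurable,
      integral_fintype .of_finite]
    refine Finset.sum_congr rfl fun i _ => ?_
    rw [measureReal_def, Measure.map_apply (hmeas k) (measurableSet_singleton i), hlaw k i,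
      ENNReal.toReal_ofReal (hp i).le, smul_eq_mul]
  -- integrability of functions of a single index
  have hint1 : ∀ (k : Fin n) (F : Fin N → ℝ),
      Integrable (fun ω => F (I k ω)) μ := by
    intro k F
    haveI : IsProbabilityMeasure (μ.map (I k)) :=
      Measure.isProbabilityMeasure_map (hmeas k).aemeasurable
    exact (integrable_map_measure (measurable_of_countable F).aestronglyMeasurable
      (hmeas k).aemeasurable).mp .of_finite
  -- integrability of functions of a pair of indices
  have hint2 : ∀ (k l : Fin n) (H : Fin N × Fin N → ℝ),
      Integrable (fun ω => H (I k ω, I l ω)) μ := by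
    intro k l H
    have hpair : Measurable (fun ω => (I k ω, I l ω)) := (hmeas k).prodMk (hmeas l)
    haveI : IsProbabilityMeasure (μ.map (fun ω => (I k ω, I l ω))) :=
      Measure.isProbabilityMeasure_map hpair.aemeasurable
    exact (integrable_map_measure (measurable_of_countable H).aestronglyMeasurable
      hpair.aemeasurable).mp .of_finite
  -- joint law of two distinct indices
  have hjoint : ∀ (k l : Fin n), k ≠ l → ∀ (H : Fin N × Fin N → ℝ),
      ∫ ω, H (I k ω, I l ω) ∂μ = ∑ i, ∑ j, (p i * p j) * H (i, j) := by
    intro k l hkl H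
    have hpair : Measurable (fun ω => (I k ω, I l ω)) := (hmeas k).prodMk (hmeas l)
    haveI : IsProbabilityMeasure (μ.map (fun ω => (I k ω, I l ω))) :=
      Measure.isProbabilityMeasure_map hpair.aemeasurable
    rw [← integral_map hpair.aemeasurable
      (measurable_of_countable H).aestronglyMeasurable,
      integral_fintype .of_finite, Fintype.sum_prod_type]
    refine Finset.sum_congr rfl fun i _ => Finset.sum_congr rfl fun j _ => ?_
    rw [measureReal_def]
    have hpre : (fun ω => (I k ω, I l ω)) ⁻¹' {(i, j)} = I k ⁻¹' {i} ∩ I l ⁻¹' {j} := by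
      ext ω; simp [Prod.ext_iff]
    rw [Measure.map_apply hpair (measurableSet_singleton _), hpre,
      (hindep.indepFun hkl).measure_inter_preimage_eq_mul _ _
        (measurableSet_singleton i) (measurableSet_singleton j),
      hlaw, hlaw, ← ENNReal.ofReal_mul (hp i).le,
      ENNReal.toReal_ofReal (mul_nonneg (hp i).le (hp j).le), smul_eq_mul]
  -- pointwise expansion of the squared norm
  have hpt : ∀ ω, ‖c • (∑ k, X k ω) - g‖ ^ 2
      = (c ^ 2 * ∑ k, ∑ l, (inner ℝ (X k ω) (X l ω) : ℝ))
        - (2 * c) * (∑ k, (inner ℝ (X k ω) g : ℝ)) + ‖g‖ ^ 2 := by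
    intro ω
    rw [norm_sub_sq_real, real_inner_smul_left, norm_smul, mul_pow, Real.norm_eq_abs,
      sq_abs, ← real_inner_self_eq_norm_sq (∑ k, X k ω)]
    simp only [sum_inner, inner_sum]
    rw [Finset.sum_comm]
    ring
  -- expected values
  have hAkk : ∀ k : Fin n, ∫ ω, (inner ℝ (X k ω) (X k ω) : ℝ) ∂μ
      = ∑ i, ‖v i‖ ^ 2 / p i := by
    intro k
    rw [hsingle k (fun i => (inner ℝ ((p i)⁻¹ • v i) ((p i)⁻¹ • v i) : ℝ))]
    refine Finset.sum_congr rfl fun i _ => ?_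
    rw [real_inner_smul_left, real_inner_smul_right, real_inner_self_eq_norm_sq]
    field_simp [(hp i).ne']
  have hAkl : ∀ k l : Fin n, k ≠ l → ∫ ω, (inner ℝ (X k ω) (X l ω) : ℝ) ∂μ
      = ‖g‖ ^ 2 := by
    intro k l hkl
    rw [hjoint k l hkl (fun q => (inner ℝ ((p q.1)⁻¹ • v q.1) ((p q.2)⁻¹ • v q.2) : ℝ))]
    have key : ∀ i j : Fin N, (p i * p j) *
        (inner ℝ ((p i)⁻¹ • v i) ((p j)⁻¹ • v j) : ℝ) = inner ℝ (v i) (v j) := by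
      intro i j
      rw [real_inner_smul_left, real_inner_smul_right]
      field_simp [(hp i).ne', (hp j).ne']
    simp only [key]
    rw [← real_inner_self_eq_norm_sq, hgdef, sum_inner]
    simp only [inner_sum]
  have hBk : ∀ k : Fin n, ∫ ω, (inner ℝ (X k ω) g : ℝ) ∂μ = ‖g‖ ^ 2 := by
    intro k
    rw [hsingle k (fun i => (inner ℝ ((p i)⁻¹ • v i) g : ℝ))]
    have key : ∀ i : Fin N, p i * (inner ℝ ((p i)⁻¹ • v i) g : ℝ) = inner ℝ (v i) g := by
      intro i
      rw [real_inner_smul_left]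
      field_simp [(hp i).ne']
    simp only [key]
    rw [← real_inner_self_eq_norm_sq, hgdef, sum_inner]
  -- integrability of the pieces
  have hA : ∀ k l : Fin n, Integrable (fun ω => (inner ℝ (X k ω) (X l ω) : ℝ)) μ :=
    fun k l => hint2 k l (fun q => (inner ℝ ((p q.1)⁻¹ • v q.1) ((p q.2)⁻¹ • v q.2) : ℝ))
  have hB : ∀ k : Fin n, Integrable (fun ω => (inner ℝ (X k ω) g : ℝ)) μ :=
    fun k => hint1 k (fun i => (inner ℝ ((p i)⁻¹ • v i) g : ℝ))
  have hD : Integrable (fun ω => ∑ k, ∑ l, (inner ℝ (X k ω) (X l ω) : ℝ)) μ :=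
    integrable_finset_sum _ fun k _ => integrable_finset_sum _ fun l _ => hA k l
  have hBsum : Integrable (fun ω => ∑ k, (inner ℝ (X k ω) g : ℝ)) μ :=
    integrable_finset_sum _ fun k _ => hB k
  have h2 : Integrable (fun ω => c ^ 2 * ∑ k, ∑ l, (inner ℝ (X k ω) (X l ω) : ℝ)) μ :=
    hD.const_mul _
  have h3 : Integrable (fun ω => (2 * c) * ∑ k, (inner ℝ (X k ω) g : ℝ)) μ :=
    hBsum.const_mul _
  have h1 : Integrable (fun ω => c ^ 2 * (∑ k, ∑ l, (inner ℝ (X k ω) (X l ω) : ℝ))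
      - (2 * c) * (∑ k, (inner ℝ (X k ω) g : ℝ))) μ := h2.sub h3
  have hIDsum : ∫ ω, (∑ k, ∑ l, (inner ℝ (X k ω) (X l ω) : ℝ)) ∂μ
      = ∑ k, ∑ l, ∫ ω, (inner ℝ (X k ω) (X l ω) : ℝ) ∂μ := by
    rw [integral_finset_sum _ (fun k _ => integrable_finset_sum _ fun l _ => hA k l)]
    exact Finset.sum_congr rfl fun k _ => integral_finset_sum _ fun l _ => hA k l
  have hIBsum : ∫ ω, (∑ k, (inner ℝ (X k ω) g : ℝ)) ∂μ
      = ∑ k, ∫ ω, (inner ℝ (X k ω) g : ℝ) ∂μ :=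
    integral_finset_sum _ fun k _ => hB k
  have hval : ∀ k l : Fin n, ∫ ω, (inner ℝ (X k ω) (X l ω) : ℝ) ∂μ
      = if k = l then ∑ i, ‖v i‖ ^ 2 / p i else ‖g‖ ^ 2 := by
    intro k l
    by_cases hkl : k = l
    · subst hkl; rw [if_pos rfl]; exact hAkk k
    · rw [if_neg hkl]; exact hAkl k l hkl
  -- compute the integral
  calc ∫ ω, ‖c • (∑ k, X k ω) - g‖ ^ 2 ∂μ
      = ∫ ω, ((c ^ 2 * ∑ k, ∑ l, (inner ℝ (X k ω) (X l ω) : ℝ))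
        - (2 * c) * (∑ k, (inner ℝ (X k ω) g : ℝ)) + ‖g‖ ^ 2) ∂μ := by
        simp only [hpt]
    _ = (c ^ 2 * ∑ k, ∑ l, ∫ ω, (inner ℝ (X k ω) (X l ω) : ℝ) ∂μ)
        - (2 * c) * (∑ k, ∫ ω, (inner ℝ (X k ω) g : ℝ) ∂μ) + ‖g‖ ^ 2 := by
        rw [integral_add h1 (integrable_const _), integral_sub h2 h3,
          integral_const_mul, integral_const_mul, hIDsum, hIBsum, integral_const,
          measureReal_def, measure_univ, ENNReal.toReal_one, one_smul]
    _ = (c ^ 2 * ((n : ℝ) * ((n : ℝ) * ‖g‖ ^ 2 + ((∑ i, ‖v i‖ ^ 2 / p i) - ‖g‖ ^ 2))))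
        - (2 * c) * ((n : ℝ) * ‖g‖ ^ 2) + ‖g‖ ^ 2 := by
        have e2 : ∑ k, ∫ ω, (inner ℝ (X k ω) g : ℝ) ∂μ = (n : ℝ) * ‖g‖ ^ 2 := by
          rw [Finset.sum_congr rfl (fun k _ => hBk k), Finset.sum_const,
            Finset.card_univ, Fintype.card_fin, nsmul_eq_mul]
        have e1 : ∑ k : Fin n, ∑ l : Fin n, ∫ ω, (inner ℝ (X k ω) (X l ω) : ℝ) ∂μ
            = (n : ℝ) * ((n : ℝ) * ‖g‖ ^ 2 + ((∑ i, ‖v i‖ ^ 2 / p i) - ‖g‖ ^ 2)) := by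
          have einner : ∀ k : Fin n, ∑ l : Fin n, ∫ ω, (inner ℝ (X k ω) (X l ω) : ℝ) ∂μ
              = (n : ℝ) * ‖g‖ ^ 2 + ((∑ i, ‖v i‖ ^ 2 / p i) - ‖g‖ ^ 2) := by
            intro k
            rw [Finset.sum_congr rfl (fun l _ => hval k l)]
            have : ∀ l : Fin n, (if k = l then ∑ i, ‖v i‖ ^ 2 / p i else ‖g‖ ^ 2)
                = ‖g‖ ^ 2 + (if k = l then (∑ i, ‖v i‖ ^ 2 / p i) - ‖g‖ ^ 2 else 0) := by
              intro l; split_ifs <;> ring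
            simp only [this]
            rw [Finset.sum_add_distrib, Finset.sum_ite_eq Finset.univ k
              (fun _ => (∑ i, ‖v i‖ ^ 2 / p i) - ‖g‖ ^ 2), if_pos (Finset.mem_univ k),
              Finset.sum_const, Finset.card_univ, Fintype.card_fin, nsmul_eq_mul]
          rw [Finset.sum_congr rfl (fun k _ => einner k), Finset.sum_const,
            Finset.card_univ, Fintype.card_fin, nsmul_eq_mul]
        rw [e1, e2]
    _ = (1 / (n : ℝ)) * ((∑ i, ‖v i‖ ^ 2 / p i) - ‖g‖ ^ 2) := by
        rw [hcdef]
        field_simp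
        ring
end

section
/- Let N ≥ 1 and let u, w : Fin N → ℝ^d satisfy u(i) ≠ w(i) for all i. Define p*(i) = ‖u(i) − w(i)‖ / ∑_{k=1}^N ‖u(k) − w(k)‖. Then p* is a probability vector with strictly positive entries, ∑_{i} ‖u(i) − w(i)‖²/p*(i) = ( ∑_{i} ‖u(i) − w(i)‖ )², and for every probability vector p with p i > 0 and ∑ i, p i = 1 one has ∑_{i} ‖u(i) − w(i)‖²/p*(i) ≤ ∑_{i} ‖u(i) − w(i)‖²/p(i). -/
/-- Lemma 3.2: for the control-variate estimator, the subsampling weights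
proportional to `‖u i − w i‖` form a probability vector that minimises the
pseudo-variance objective `∑ i, ‖u i − w i‖² / p i`, attaining the value
`(∑ i, ‖u i − w i‖)²`. -/
theorem optimal_weights_sgld_cv_ps
    {N d : ℕ} (hN : 1 ≤ N)
    (u w : Fin N → EuclideanSpace ℝ (Fin d)) (huw : ∀ i, u i ≠ w i)
    (pstar : Fin N → ℝ)
    (hpstar : ∀ i, pstar i = ‖u i - w i‖ / ∑ k, ‖u k - w k‖) :
    (∀ i, 0 < pstar i) ∧ (∑ i, pstar i = 1) ∧
      (∑ i, ‖u i - w i‖ ^ 2 / pstar i = (∑ i, ‖u i - w i‖) ^ 2) ∧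
      (∀ p : Fin N → ℝ, (∀ i, 0 < p i) → ∑ i, p i = 1 →
        ∑ i, ‖u i - w i‖ ^ 2 / pstar i ≤ ∑ i, ‖u i - w i‖ ^ 2 / p i) := by
  have ha : ∀ i, 0 < ‖u i - w i‖ := fun i =>
    norm_pos_iff.mpr (sub_ne_zero.mpr (huw i))
  have hS : 0 < ∑ k, ‖u k - w k‖ := by
    have : (Finset.univ : Finset (Fin N)).Nonempty := by
      exact Finset.univ_nonempty_iff.mpr (Fin.pos_iff_nonempty.mp (by omega))
    exact Finset.sum_pos (fun i _ => ha i) this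
  have hval : ∑ i, ‖u i - w i‖ ^ 2 / pstar i = (∑ i, ‖u i - w i‖) ^ 2 := by
    have h : ∀ i : Fin N, ‖u i - w i‖ ^ 2 / pstar i = ‖u i - w i‖ * ∑ k, ‖u k - w k‖ := by
      intro i
      rw [hpstar i]
      rw [div_div_eq_mul_div, div_eq_iff (ha i).ne']
      ring
    simp_rw [h, ← Finset.sum_mul, sq]
  refine ⟨fun i => by rw [hpstar i]; exact div_pos (ha i) hS,
    by simp_rw [hpstar, ← Finset.sum_div]; exact div_self hS.ne', hval, ?_⟩
  intro p hp hp1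
  rw [hval]
  calc (∑ i, ‖u i - w i‖) ^ 2 = (∑ i, ‖u i - w i‖) ^ 2 / ∑ i, p i := by rw [hp1, div_one]
    _ ≤ ∑ i, ‖u i - w i‖ ^ 2 / p i :=
      Finset.sq_sum_div_le_sum_sq_div _ _ fun i _ => hp i
end

section
/- Let N ≥ 1, n ≥ 1 be integers, let p : Fin N → ℝ be a probability vector with p i > 0 and ∑ i, p i = 1, let I₁, …, I_n be i.i.d. random indices with P(I_k = i) = p i, and let θ, θ̂ ∈ ℝ^d. Let f_1, …, f_N : ℝ^d → ℝ be differentiable with gradients ∇f_i, and suppose there are constants L_i ≥ 0 such that ‖∇f_i(θ') − ∇f_i(θ'')‖ ≤ L_i ‖θ' − θ''‖ for all θ', θ'' ∈ ℝ^d. Then the pseudo-variance of the control-variate estimator g̃ = c + (1/n) ∑_{k=1}^n (1/p(I_k)) • (∇f_{I_k}(θ) − ∇f_{I_k}(θ̂)), where c = ∑_i ∇f_i(θ̂) + v₀ for any fixed vector v₀, satisfies E[‖g̃ − E[g̃]‖²] ≤ (1/n) ‖θ − θ̂‖² ∑_{i=1}^N L_i² / p(i). -/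
open MeasureTheory ProbabilityTheory

private lemma sum_pi_prod' {n N : ℕ} (g : Fin n → Fin N → ℝ) :
    ∑ a : Fin n → Fin N, ∏ m, g m (a m) = ∏ m, ∑ i, g m i := by
  rw [Finset.prod_univ_sum, Fintype.piFinset_univ]

private lemma marg1' {n N : ℕ} {p : Fin N → ℝ} (hsum : ∑ i, p i = 1) (j : Fin n)
    (h : Fin N → ℝ) :
    ∑ a : Fin n → Fin N, (∏ m, p (a m)) * h (a j) = ∑ i, p i * h i := by
  classical
  have e1 : ∀ a : Fin n → Fin N, (∏ m, p (a m)) * h (a j)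
      = ∏ m, (p (a m) * (if m = j then h (a m) else 1)) := by
    intro a
    rw [Finset.prod_mul_distrib, Finset.prod_ite_eq' Finset.univ j (fun m => h (a m))]
    simp
  simp_rw [e1]
  rw [sum_pi_prod' (fun m i => p i * (if m = j then h i else 1))]
  have e2 : ∀ m : Fin n, (∑ i, p i * (if m = j then h i else 1))
      = if m = j then ∑ i, p i * h i else 1 := by
    intro m; split <;> simp [hsum]
  simp_rw [e2]
  rw [Finset.prod_ite_eq' Finset.univ j (fun _ => ∑ i, p i * h i)]
  simp

private lemma marg2' {n N : ℕ} {p : Fin N → ℝ} (hsum : ∑ i, p i = 1) {j k : Fin n}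
    (hjk : j ≠ k) (u v : Fin N → ℝ) :
    ∑ a : Fin n → Fin N, (∏ m, p (a m)) * (u (a j) * v (a k))
      = (∑ i, p i * u i) * (∑ i, p i * v i) := by
  classical
  have e1 : ∀ a : Fin n → Fin N, (∏ m, p (a m)) * (u (a j) * v (a k))
      = ∏ m, (p (a m) * ((if m = j then u (a m) else 1) * (if m = k then v (a m) else 1))) := by
    intro a
    simp_rw [Finset.prod_mul_distrib]
    rw [Finset.prod_ite_eq' Finset.univ j (fun m => u (a m)),
      Finset.prod_ite_eq' Finset.univ k (fun m => v (a m))]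
    simp [mul_assoc]
  simp_rw [e1]
  rw [sum_pi_prod' (fun m i => p i * ((if m = j then u i else 1) * (if m = k then v i else 1)))]
  have e2 : ∀ m : Fin n, (∑ i, p i * ((if m = j then u i else 1) * (if m = k then v i else 1)))
      = (if m = j then ∑ i, p i * u i else 1) * (if m = k then ∑ i, p i * v i else 1) := by
    intro m
    by_cases h1 : m = j
    · subst h1
      simp [hjk, hsum]
    · by_cases h2 : m = k <;> simp [h1, h2, hsum, Ne.symm hjk]
  simp_rw [e2]
  rw [Finset.prod_mul_distrib,
    Finset.prod_ite_eq' Finset.univ j (fun _ => ∑ i, p i * u i),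
    Finset.prod_ite_eq' Finset.univ k (fun _ => ∑ i, p i * v i)]
  simp

/-- Lemma 3.3: under Lipschitz continuity of the gradients, the pseudo-variance
of the SGLD-CV-PS gradient estimator is bounded by
`(1/n) ‖θ − θ̂‖² ∑ i, L i ² / p i`. -/
theorem pseudoVariance_cv_bound
    {N n d : ℕ} (hN : 1 ≤ N) (hn : 1 ≤ n)
    {Ω : Type*} [MeasurableSpace Ω] (μ : Measure Ω) [IsProbabilityMeasure μ]
    (I : Fin n → Ω → Fin N)
    (hmeas : ∀ k, Measurable (I k))
    (hindep : iIndepFun I μ)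
    (p : Fin N → ℝ) (hp : ∀ i, 0 < p i) (hsum : ∑ i, p i = 1)
    (hlaw : ∀ k i, μ (I k ⁻¹' {i}) = ENNReal.ofReal (p i))
    (θ θhat : EuclideanSpace ℝ (Fin d))
    (f : Fin N → EuclideanSpace ℝ (Fin d) → ℝ)
    (hdiff : ∀ i, Differentiable ℝ (f i))
    (L : Fin N → ℝ) (hL : ∀ i, 0 ≤ L i)
    (hLip : ∀ i (θ' θ'' : EuclideanSpace ℝ (Fin d)),
      ‖gradient (f i) θ' - gradient (f i) θ''‖ ≤ L i * ‖θ' - θ''‖)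
    (v₀ : EuclideanSpace ℝ (Fin d))
    (G : Ω → EuclideanSpace ℝ (Fin d))
    (hG : ∀ ω, G ω = ((∑ i, gradient (f i) θhat) + v₀)
      + (1 / (n : ℝ)) • ∑ k, (p (I k ω))⁻¹ •
          (gradient (f (I k ω)) θ - gradient (f (I k ω)) θhat)) :
    ∫ ω, ‖G ω - ∫ ω', G ω' ∂μ‖ ^ 2 ∂μ
      ≤ (1 / (n : ℝ)) * ‖θ - θhat‖ ^ 2 * ∑ i, (L i) ^ 2 / p i := by
  classical
  have hn0 : (n : ℝ) ≠ 0 := Nat.cast_ne_zero.mpr (by omega)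
  set φ : Fin N → EuclideanSpace ℝ (Fin d) :=
    fun i => (p i)⁻¹ • (gradient (f i) θ - gradient (f i) θhat) with hφ
  set c : EuclideanSpace ℝ (Fin d) := (∑ i, gradient (f i) θhat) + v₀ with hc
  set H : (Fin n → Fin N) → EuclideanSpace ℝ (Fin d) :=
    fun a => c + (1 / (n : ℝ)) • ∑ k, φ (a k) with hH
  set J : Ω → (Fin n → Fin N) := fun ω k => I k ω with hJdef
  have hJm : Measurable J := measurable_pi_lambda _ hmeas
  have hGJ : ∀ ω, G ω = H (J ω) := fun ω => hG ω
  set w : (Fin n → Fin N) → ℝ := fun a => ∏ k, p (a k) with hw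
  have hw0 : ∀ a, 0 ≤ w a := fun a => Finset.prod_nonneg (fun k _ => (hp _).le)
  haveI : IsProbabilityMeasure (μ.map J) := Measure.isProbabilityMeasure_map hJm.aemeasurable
  have hatom : ∀ a : Fin n → Fin N, μ.map J {a} = ENNReal.ofReal (w a) := by
    intro a
    rw [Measure.map_apply hJm (measurableSet_singleton a)]
    have hpre : J ⁻¹' {a} = ⋂ k, I k ⁻¹' {a k} := by
      ext ω
      simp [hJdef, Set.mem_iInter, funext_iff]
    rw [hpre]
    have h2 := (iIndepFun_iff_measure_inter_preimage_eq_mul.mp hindep Finset.univ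
      (sets := fun k => {a k}) (fun k _ => measurableSet_singleton _))
    simp only [Finset.mem_univ, Set.iInter_true] at h2
    rw [h2]
    simp_rw [hlaw]
    rw [← ENNReal.ofReal_prod_of_nonneg (fun i _ => (hp (a i)).le)]
  -- reduction of integrals to finite sums
  have keyV : ∀ (F : (Fin n → Fin N) → EuclideanSpace ℝ (Fin d)),
      ∫ ω, F (J ω) ∂μ = ∑ a, w a • F a := by
    intro F
    rw [← integral_map hJm.aemeasurable
      ((measurable_of_countable F).stronglyMeasurable.aestronglyMeasurable)]
    rw [integral_fintype Integrable.of_finite]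
    simp_rw [measureReal_def, hatom, ENNReal.toReal_ofReal (hw0 _)]
  have keyR : ∀ (F : (Fin n → Fin N) → ℝ),
      ∫ ω, F (J ω) ∂μ = ∑ a, w a * F a := by
    intro F
    rw [← integral_map hJm.aemeasurable
      ((measurable_of_countable F).stronglyMeasurable.aestronglyMeasurable)]
    rw [integral_fintype Integrable.of_finite]
    simp_rw [measureReal_def, hatom, ENNReal.toReal_ofReal (hw0 _), smul_eq_mul]
  have hw1 : ∑ a, w a = 1 := by
    have := sum_pi_prod' (fun _ : Fin n => p)
    simpa [hw, hsum] using this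
  -- the mean
  set M : EuclideanSpace ℝ (Fin d) := ∑ i, p i • φ i with hM
  have hmargV : ∀ k : Fin n, ∑ a : Fin n → Fin N, w a • φ (a k) = M := by
    intro k
    have hco : ∀ c' : Fin d, (∑ a : Fin n → Fin N, w a • φ (a k)) c' = M c' := by
      intro c'
      rw [hM, WithLp.ofLp_sum, WithLp.ofLp_sum, Finset.sum_apply c' Finset.univ, Finset.sum_apply c' Finset.univ]
      simp only [PiLp.smul_apply, smul_eq_mul]
      exact marg1' hsum k (fun i => φ i c')
    exact WithLp.ofLp_injective _ (funext hco)
  have hmean : ∫ ω', G ω' ∂μ = c + M := by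
    simp_rw [hGJ]
    rw [keyV H]
    have : ∀ a : Fin n → Fin N, w a • H a
        = w a • c + (1 / (n : ℝ)) • ∑ k, w a • φ (a k) := by
      intro a
      rw [hH, smul_add]
      congr 1
      rw [smul_comm, Finset.smul_sum]
    simp_rw [this]
    rw [Finset.sum_add_distrib, ← Finset.sum_smul, hw1, one_smul,
      ← Finset.smul_sum, Finset.sum_comm]
    congr 1
    simp_rw [hmargV]
    rw [Finset.sum_const, Finset.card_univ, Fintype.card_fin,
      ← Nat.cast_smul_eq_nsmul ℝ, smul_smul]
    rw [one_div, inv_mul_cancel₀ hn0, one_smul]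
  -- centered summands
  set ψ : Fin N → EuclideanSpace ℝ (Fin d) := fun i => φ i - M with hψ
  have hψ0 : ∀ c' : Fin d, ∑ i, p i * ψ i c' = 0 := by
    intro c'
    have : ∑ i, p i • ψ i = 0 := by
      simp_rw [hψ, smul_sub, Finset.sum_sub_distrib, ← Finset.sum_smul, hsum, one_smul,
        ← hM, sub_self]
    calc ∑ i, p i * ψ i c' = (∑ i, p i • ψ i) c' := by
          rw [WithLp.ofLp_sum, Finset.sum_apply c' Finset.univ]
          simp [PiLp.smul_apply]
      _ = 0 := by rw [this]; rfl
  have hHm : ∀ a : Fin n → Fin N, H a - (c + M) = (1 / (n : ℝ)) • ∑ k, ψ (a k) := by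
    intro a
    rw [hH]
    simp_rw [hψ, Finset.sum_sub_distrib, smul_sub]
    rw [Finset.sum_const, Finset.card_univ, Fintype.card_fin,
      ← Nat.cast_smul_eq_nsmul ℝ, smul_smul]
    rw [one_div, inv_mul_cancel₀ hn0, one_smul]
    abel
  -- expand the variance
  set V : ℝ := ∑ i, p i * ‖ψ i‖ ^ 2 with hV
  have hdiag : ∀ j : Fin n,
      ∑ a : Fin n → Fin N, w a * (inner ℝ (ψ (a j)) (ψ (a j)) : ℝ) = V := by
    intro j
    have := marg1' hsum j (fun i => ‖ψ i‖ ^ 2)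
    simp_rw [real_inner_self_eq_norm_sq]
    exact this
  have hcross : ∀ j k : Fin n, j ≠ k →
      ∑ a : Fin n → Fin N, w a * (inner ℝ (ψ (a j)) (ψ (a k)) : ℝ) = 0 := by
    intro j k hjk
    have hinner : ∀ x y : EuclideanSpace ℝ (Fin d),
        (inner ℝ x y : ℝ) = ∑ c', x c' * y c' := by
      intro x y
      simp [PiLp.inner_apply, RCLike.inner_apply, mul_comm]
    simp_rw [hinner, Finset.mul_sum]
    rw [Finset.sum_comm]
    have : ∀ c' : Fin d,
        ∑ a : Fin n → Fin N, w a * (ψ (a j) c' * ψ (a k) c') = 0 := by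
      intro c'
      have := marg2' hsum hjk (fun i => ψ i c') (fun i => ψ i c')
      rw [hψ0 c'] at this
      simpa [hw] using this
    simp_rw [this, Finset.sum_const_zero]
  have hvar : ∫ ω, ‖G ω - ∫ ω', G ω' ∂μ‖ ^ 2 ∂μ = (1 / (n : ℝ)) * V := by
    rw [hmean]
    simp_rw [hGJ]
    rw [keyR (fun a => ‖H a - (c + M)‖ ^ 2)]
    simp_rw [hHm, norm_smul]
    have hnormsq : ∀ v : Fin n → EuclideanSpace ℝ (Fin d),
        ‖∑ k, v k‖ ^ 2 = ∑ j, ∑ k, (inner ℝ (v j) (v k) : ℝ) := by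
      intro v
      rw [← real_inner_self_eq_norm_sq, sum_inner]
      exact Finset.sum_congr rfl fun j _ => inner_sum _ _ _
    have step : ∀ a : Fin n → Fin N,
        w a * (‖(1 : ℝ) / n‖ * ‖∑ k, ψ (a k)‖) ^ 2
          = (1 / (n : ℝ))^2 * ∑ j, ∑ k, w a * (inner ℝ (ψ (a j)) (ψ (a k)) : ℝ) := by
      intro a
      rw [mul_pow, Real.norm_eq_abs, sq_abs, hnormsq]
      simp_rw [Finset.mul_sum]
      exact Finset.sum_congr rfl fun j _ => Finset.sum_congr rfl fun k _ => by ring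
    simp_rw [step]
    rw [← Finset.mul_sum]
    have swap : ∑ a : Fin n → Fin N, ∑ j : Fin n, ∑ k : Fin n,
        w a * (inner ℝ (ψ (a j)) (ψ (a k)) : ℝ) = (n : ℝ) * V := by
      rw [Finset.sum_comm]
      have hj : ∀ j : Fin n, ∑ a : Fin n → Fin N, ∑ k : Fin n,
          w a * (inner ℝ (ψ (a j)) (ψ (a k)) : ℝ) = V := by
        intro j
        rw [Finset.sum_comm]
        have hk : ∀ k : Fin n, ∑ a : Fin n → Fin N,
            w a * (inner ℝ (ψ (a j)) (ψ (a k)) : ℝ) = if k = j then V else 0 := by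
          intro k
          by_cases hkj : k = j
          · subst hkj; rw [if_pos rfl]; exact hdiag k
          · rw [if_neg hkj]; exact hcross j k (Ne.symm hkj)
        simp_rw [hk]
        simp
      simp_rw [hj]
      simp [Finset.sum_const, nsmul_eq_mul]
    rw [swap]
    field_simp
  -- final bound
  rw [hvar]
  have hexp : ∀ i, p i * ‖ψ i‖ ^ 2
      = p i * ‖φ i‖ ^ 2 - 2 * (p i * (inner ℝ (φ i) M : ℝ)) + p i * ‖M‖ ^ 2 := by
    intro i
    have : ‖ψ i‖ ^ 2 = ‖φ i‖ ^ 2 - 2 * (inner ℝ (φ i) M : ℝ) + ‖M‖ ^ 2 := by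
      simp only [hψ]
      exact norm_sub_sq_real _ _
    rw [this]; ring
  have hip : ∑ i, p i * (inner ℝ (φ i) M : ℝ) = ‖M‖ ^ 2 := by
    calc ∑ i, p i * (inner ℝ (φ i) M : ℝ) = (inner ℝ (∑ i, p i • φ i) M : ℝ) := by
          rw [sum_inner]
          exact Finset.sum_congr rfl fun i _ => (real_inner_smul_left _ _ _).symm
      _ = ‖M‖ ^ 2 := by rw [← hM, real_inner_self_eq_norm_sq]
  have hVeq : V = (∑ i, p i * ‖φ i‖ ^ 2) - ‖M‖ ^ 2 := by
    rw [hV]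
    simp_rw [hexp]
    rw [Finset.sum_add_distrib, Finset.sum_sub_distrib, ← Finset.mul_sum, hip,
      ← Finset.sum_mul, hsum]
    ring
  have h1 : V ≤ ∑ i, p i * ‖φ i‖ ^ 2 := by
    rw [hVeq]
    have : (0:ℝ) ≤ ‖M‖ ^ 2 := sq_nonneg _
    linarith
  have h2 : ∑ i, p i * ‖φ i‖ ^ 2 ≤ ‖θ - θhat‖ ^ 2 * ∑ i, L i ^ 2 / p i := by
    rw [Finset.mul_sum]
    refine Finset.sum_le_sum fun i _ => ?_
    have hpi := hp i
    have hd := hLip i θ θhat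
    have hφn : ‖φ i‖ = (p i)⁻¹ * ‖gradient (f i) θ - gradient (f i) θhat‖ := by
      simp only [hφ]
      rw [norm_smul, Real.norm_eq_abs, abs_of_pos (inv_pos.mpr hpi)]
    rw [hφn]
    have hDb : ‖gradient (f i) θ - gradient (f i) θhat‖ ^ 2 ≤ (L i * ‖θ - θhat‖) ^ 2 := by
      have := pow_le_pow_left₀ (norm_nonneg _) hd 2
      simpa using this
    have heq : p i * ((p i)⁻¹ * ‖gradient (f i) θ - gradient (f i) θhat‖) ^ 2
        = ‖gradient (f i) θ - gradient (f i) θhat‖ ^ 2 / p i := by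
      field_simp
    rw [heq]
    have heq2 : ‖θ - θhat‖ ^ 2 * (L i ^ 2 / p i) = (L i * ‖θ - θhat‖) ^ 2 / p i := by
      field_simp
    rw [heq2]
    exact (div_le_div_iff_of_pos_right hpi).mpr hDb
  have hn' : (0:ℝ) ≤ 1 / n := by positivity
  calc (1 / (n : ℝ)) * V
      ≤ (1 / (n : ℝ)) * (‖θ - θhat‖ ^ 2 * ∑ i, L i ^ 2 / p i) :=
        mul_le_mul_of_nonneg_left (h1.trans h2) hn'
    _ = (1 / (n : ℝ)) * ‖θ - θhat‖ ^ 2 * ∑ i, L i ^ 2 / p i := by ring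
end

section
/- Let N ≥ 1, n ≥ 1 be integers, let p : Fin N → ℝ be a probability vector with p i > 0 and ∑ i, p i = 1, let I₁, …, I_n be i.i.d. random indices with P(I_k = i) = p i, let θ, θ̂ ∈ ℝ^d, and let f_1, …, f_N : ℝ^d → ℝ be differentiable with L_i-Lipschitz gradients (‖∇f_i(θ') − ∇f_i(θ'')‖ ≤ L_i‖θ' − θ''‖). Fix V₀ > 0. If the subsample size satisfies n > (1/V₀) ‖θ − θ̂‖² ∑_{i=1}^N L_i²/p(i), then the pseudo-variance of the control-variate estimator g̃ = c + (1/n) ∑_{k=1}^n (1/p(I_k)) • (∇f_{I_k}(θ) − ∇f_{I_k}(θ̂)) (with c any fixed vector) is strictly less than V₀: E[‖g̃ − E[g̃]‖²] < V₀. -/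
open MeasureTheory ProbabilityTheory

section Aux

variable {N n : ℕ} {p : Fin N → ℝ}

/-- total mass of the product weights -/
lemma aux_sum_W (hsum : ∑ i, p i = 1) :
    ∑ j : Fin n → Fin N, ∏ k, p (j k) = 1 := by
  rw [← Fintype.piFinset_univ, ← Finset.prod_univ_sum]
  simp [hsum]

/-- single-coordinate marginal -/
lemma aux_marg (hsum : ∑ i, p i = 1) (a : Fin n) (φ : Fin N → ℝ) :
    ∑ j : Fin n → Fin N, (∏ k, p (j k)) * φ (j a) = ∑ i, p i * φ i := by
  set g : Fin n → Fin N → ℝ := fun k y => if k = a then p y * φ y else p y with hgdef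
  have h1 : ∀ j : Fin n → Fin N, (∏ k, p (j k)) * φ (j a)
      = ∏ k, g k (j k) := by
    intro j
    simp only [hgdef]
    rw [Finset.prod_eq_mul_prod_sdiff_singleton_of_mem (Finset.mem_univ a)
      (fun k => if k = a then p (j k) * φ (j k) else p (j k)),
      Finset.prod_eq_mul_prod_sdiff_singleton_of_mem (Finset.mem_univ a) (fun k => p (j k))]
    rw [if_pos rfl]
    have : ∀ k ∈ Finset.univ \ {a},
        (if k = a then p (j k) * φ (j k) else p (j k)) = p (j k) := by
      intro k hk
      rw [if_neg]
      simpa using (Finset.mem_sdiff.mp hk).2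
    rw [Finset.prod_congr rfl this]
    ring
  simp_rw [h1]
  have h2 := Finset.prod_univ_sum (fun _ : Fin n => (Finset.univ : Finset (Fin N))) g
  rw [Fintype.piFinset_univ] at h2
  rw [← h2]
  rw [Finset.prod_eq_single a]
  · simp [hgdef]
  · intro b _ hb
    simp [hgdef, hb, hsum]
  · simp

/-- two-coordinate marginal -/
lemma aux_marg2 (hsum : ∑ i, p i = 1) {a b : Fin n} (hab : a ≠ b) (φ ψ : Fin N → ℝ) :
    ∑ j : Fin n → Fin N, (∏ k, p (j k)) * (φ (j a) * ψ (j b))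
      = (∑ i, p i * φ i) * (∑ i, p i * ψ i) := by
  set g : Fin n → Fin N → ℝ := fun k y =>
    if k = a then p y * φ y else if k = b then p y * ψ y else p y with hgdef
  have h1 : ∀ j : Fin n → Fin N, (∏ k, p (j k)) * (φ (j a) * ψ (j b))
      = ∏ k, g k (j k) := by
    intro j
    have hb' : b ∈ Finset.univ \ ({a} : Finset (Fin n)) := by
      simp [Ne.symm hab]
    rw [Finset.prod_eq_mul_prod_sdiff_singleton_of_mem (Finset.mem_univ a) (fun k => g k (j k)),
      Finset.prod_eq_mul_prod_sdiff_singleton_of_mem hb' (fun k => g k (j k)),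
      Finset.prod_eq_mul_prod_sdiff_singleton_of_mem (Finset.mem_univ a) (fun k => p (j k)),
      Finset.prod_eq_mul_prod_sdiff_singleton_of_mem hb' (fun k => p (j k))]
    have hga : g a (j a) = p (j a) * φ (j a) := by simp [hgdef]
    have hgb : g b (j b) = p (j b) * ψ (j b) := by simp [hgdef, Ne.symm hab]
    have : ∀ k ∈ (Finset.univ \ {a}) \ {b}, g k (j k) = p (j k) := by
      intro k hk
      have hk1 := Finset.mem_sdiff.mp hk
      have hk2 := Finset.mem_sdiff.mp hk1.1
      have hka : k ≠ a := by simpa using hk2.2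
      have hkb : k ≠ b := by simpa using hk1.2
      simp [hgdef, hka, hkb]
    rw [hga, hgb, Finset.prod_congr rfl this]
    ring
  simp_rw [h1]
  have h2 := Finset.prod_univ_sum (fun _ : Fin n => (Finset.univ : Finset (Fin N))) g
  rw [Fintype.piFinset_univ] at h2
  rw [← h2]
  have key : ∀ k : Fin n,
      (∑ x, g k x)
        = if k = a then ∑ i, p i * φ i else if k = b then ∑ i, p i * ψ i else 1 := by
    intro k
    by_cases hka : k = a
    · simp [hgdef, hka]
    · by_cases hkb : k = b <;> simp [hgdef, hka, hkb, hsum]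
  rw [Finset.prod_congr rfl (fun k _ => key k)]
  have hb' : b ∈ Finset.univ \ ({a} : Finset (Fin n)) := by simp [Ne.symm hab]
  rw [Finset.prod_eq_mul_prod_sdiff_singleton_of_mem (Finset.mem_univ a),
    Finset.prod_eq_mul_prod_sdiff_singleton_of_mem hb']
  have : ∀ k ∈ (Finset.univ \ {a}) \ ({b} : Finset (Fin n)),
      (if k = a then ∑ i, p i * φ i else if k = b then ∑ i, p i * ψ i else 1) = 1 := by
    intro k hk
    have hk1 := Finset.mem_sdiff.mp hk
    have hk2 := Finset.mem_sdiff.mp hk1.1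
    have hka : k ≠ a := by simpa using hk2.2
    have hkb : k ≠ b := by simpa using hk1.2
    simp [hka, hkb]
  rw [Finset.prod_congr rfl this]
  simp [Ne.symm hab]

end Aux

section Aux2

variable {N n : ℕ} {p : Fin N → ℝ}

/-- variance of an i.i.d. sum with mean zero marginals -/
lemma aux_var (hsum : ∑ i, p i = 1) (r : Fin N → ℝ) (hr : ∑ i, p i * r i = 0) :
    ∑ j : Fin n → Fin N, (∏ k, p (j k)) * (∑ k, r (j k)) ^ 2
      = n * ∑ i, p i * r i ^ 2 := by
  have expand : ∀ j : Fin n → Fin N,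
      (∏ k, p (j k)) * (∑ k, r (j k)) ^ 2
        = ∑ a, ∑ b, (∏ k, p (j k)) * (r (j a) * r (j b)) := by
    intro j
    rw [sq, Finset.sum_mul_sum]
    rw [Finset.mul_sum]
    refine Finset.sum_congr rfl fun a _ => ?_
    rw [Finset.mul_sum]
  simp_rw [expand]
  rw [Finset.sum_comm]
  have inner : ∀ a : Fin n,
      ∑ b, ∑ j : Fin n → Fin N, (∏ k, p (j k)) * (r (j a) * r (j b))
        = ∑ i, p i * r i ^ 2 := by
    intro a
    have h1 : ∀ b, b ≠ a →
        ∑ j : Fin n → Fin N, (∏ k, p (j k)) * (r (j a) * r (j b)) = 0 := by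
      intro b hb
      rw [aux_marg2 hsum (Ne.symm hb) r r, hr]
      ring
    rw [Finset.sum_eq_single a (fun b _ hb => h1 b hb) (by simp)]
    rw [aux_marg hsum a (fun i => r i * r i)]
    refine Finset.sum_congr rfl fun i _ => ?_
    ring
  have hswap : ∀ a : Fin n,
      ∑ j : Fin n → Fin N, ∑ b, (∏ k, p (j k)) * (r (j a) * r (j b))
        = ∑ i, p i * r i ^ 2 := by
    intro a
    rw [Finset.sum_comm]
    exact inner a
  rw [Finset.sum_congr rfl fun a _ => hswap a]
  simp [mul_comm]

/-- second moment bound: centered second moment ≤ raw second moment -/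
lemma aux_second_moment (hsum : ∑ i, p i = 1) (hp : ∀ i, 0 ≤ p i) (r : Fin N → ℝ) :
    ∑ i, p i * (r i - ∑ i', p i' * r i') ^ 2 ≤ ∑ i, p i * r i ^ 2 := by
  set s := ∑ i', p i' * r i' with hs
  have expand : ∀ i, p i * (r i - s) ^ 2
      = p i * r i ^ 2 - 2 * s * (p i * r i) + s ^ 2 * p i := fun i => by ring
  rw [Finset.sum_congr rfl fun i _ => expand i]
  rw [Finset.sum_add_distrib, Finset.sum_sub_distrib, ← Finset.mul_sum, ← Finset.mul_sum,
    hsum, ← hs]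
  nlinarith [sq_nonneg s]

/-- norm squared in Euclidean space is sum of squares of coordinates -/
lemma aux_norm_sq {d : ℕ} (x : EuclideanSpace ℝ (Fin d)) : ‖x‖ ^ 2 = ∑ t, x t ^ 2 := by
  rw [EuclideanSpace.norm_eq, Real.sq_sqrt (by positivity)]
  simp [Real.norm_eq_abs, sq_abs]

/-- applying a coordinate to a finite sum in Euclidean space -/
lemma aux_sum_apply {d : ℕ} {β : Type*} (s : Finset β) (F : β → EuclideanSpace ℝ (Fin d))
    (t : Fin d) : (∑ b ∈ s, F b) t = ∑ b ∈ s, F b t := by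
  induction s using Finset.cons_induction with
  | empty => rfl
  | cons a s ha ih => rw [Finset.sum_cons, Finset.sum_cons, PiLp.add_apply, ih]

/-- integral of a function of a finitely-valued random variable -/
lemma aux_integral {Ω : Type*} [MeasurableSpace Ω] (μ : Measure Ω) [IsProbabilityMeasure μ]
    {α : Type*} [Fintype α] [MeasurableSpace α] [MeasurableSingletonClass α]
    {J : Ω → α} (hJ : Measurable J)
    {F : Type*} [NormedAddCommGroup F] [NormedSpace ℝ F] [CompleteSpace F] (g : α → F) :
    ∫ ω, g (J ω) ∂μ = ∑ j, (μ (J ⁻¹' {j})).toReal • g j := by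
  haveI : IsProbabilityMeasure (μ.map J) := Measure.isProbabilityMeasure_map hJ.aemeasurable
  rw [← integral_map hJ.aemeasurable (StronglyMeasurable.of_discrete).aestronglyMeasurable]
  rw [integral_fintype Integrable.of_finite]
  refine Finset.sum_congr rfl fun j _ => ?_
  rw [Measure.real_def, Measure.map_apply hJ (measurableSet_singleton _)]

end Aux2


/-- Adaptive subsample-size criterion (Eq. 17): if the subsample size `n`
exceeds `(1/V₀) ‖θ − θ̂‖² ∑ i, L i ² / p i`, then the pseudo-variance of the
SGLD-CV-PS gradient estimator is strictly below the threshold `V₀`. -/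
theorem adaptive_subsample_size_controls_pseudoVariance
    {N n d : ℕ} (hN : 1 ≤ N) (hn : 1 ≤ n)
    {Ω : Type*} [MeasurableSpace Ω] (μ : Measure Ω) [IsProbabilityMeasure μ]
    (I : Fin n → Ω → Fin N)
    (hmeas : ∀ k, Measurable (I k))
    (hindep : iIndepFun I μ)
    (p : Fin N → ℝ) (hp : ∀ i, 0 < p i) (hsum : ∑ i, p i = 1)
    (hlaw : ∀ k i, μ (I k ⁻¹' {i}) = ENNReal.ofReal (p i))
    (θ θhat : EuclideanSpace ℝ (Fin d))
    (f : Fin N → EuclideanSpace ℝ (Fin d) → ℝ)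
    (hdiff : ∀ i, Differentiable ℝ (f i))
    (L : Fin N → ℝ) (hL : ∀ i, 0 ≤ L i)
    (hLip : ∀ i (θ' θ'' : EuclideanSpace ℝ (Fin d)),
      ‖gradient (f i) θ' - gradient (f i) θ''‖ ≤ L i * ‖θ' - θ''‖)
    (V₀ : ℝ) (hV₀ : 0 < V₀)
    (hn_big : (n : ℝ) > (1 / V₀) * ‖θ - θhat‖ ^ 2 * ∑ i, (L i) ^ 2 / p i)
    (c : EuclideanSpace ℝ (Fin d))
    (G : Ω → EuclideanSpace ℝ (Fin d))
    (hG : ∀ ω, G ω = c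
      + (1 / (n : ℝ)) • ∑ k, (p (I k ω))⁻¹ •
          (gradient (f (I k ω)) θ - gradient (f (I k ω)) θhat)) :
    ∫ ω, ‖G ω - ∫ ω', G ω' ∂μ‖ ^ 2 ∂μ < V₀ := by
  classical
  have hn0 : ((n : ℝ)) ≠ 0 := by positivity
  have npos : (0 : ℝ) < n := by exact_mod_cast hn
  set u : Fin N → EuclideanSpace ℝ (Fin d) :=
    fun i => gradient (f i) θ - gradient (f i) θhat with hu
  set z : Fin N → EuclideanSpace ℝ (Fin d) := fun i => (p i)⁻¹ • u i with hzdef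
  set H : (Fin n → Fin N) → EuclideanSpace ℝ (Fin d) :=
    fun j => c + (1 / (n : ℝ)) • ∑ k, z (j k) with hHdef
  set J : Ω → (Fin n → Fin N) := fun ω k => I k ω with hJdef
  have hGfun : G = fun ω => H (J ω) := by
    funext ω
    rw [hG ω]
  have hJmeas : Measurable J := measurable_pi_lambda _ hmeas
  have hwμ : ∀ j : Fin n → Fin N,
      μ (J ⁻¹' {j}) = ENNReal.ofReal (∏ k, p (j k)) := by
    intro j
    have hset : J ⁻¹' {j} = ⋂ k ∈ Finset.univ, I k ⁻¹' {j k} := by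
      ext ω
      simp [hJdef, funext_iff]
    rw [hset, hindep.measure_inter_preimage_eq_mul Finset.univ
      (fun k _ => measurableSet_singleton (j k))]
    simp_rw [hlaw]
    rw [← ENNReal.ofReal_prod_of_nonneg (fun k _ => (hp (j k)).le)]
  have hw_toReal : ∀ j : Fin n → Fin N,
      (μ (J ⁻¹' {j})).toReal = ∏ k, p (j k) := by
    intro j
    rw [hwμ j, ENNReal.toReal_ofReal (Finset.prod_nonneg fun k _ => (hp (j k)).le)]
  set m := ∫ ω', G ω' ∂μ with hm
  have hmean : m = ∑ j : Fin n → Fin N, (∏ k, p (j k)) • H j := by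
    rw [hm, hGfun, aux_integral μ hJmeas]
    exact Finset.sum_congr rfl fun j _ => by rw [hw_toReal j]
  have hred : ∫ ω, ‖G ω - m‖ ^ 2 ∂μ
      = ∑ j : Fin n → Fin N, (∏ k, p (j k)) * ‖H j - m‖ ^ 2 := by
    rw [hGfun]
    refine (aux_integral μ hJmeas (fun j => ‖H j - m‖ ^ 2)).trans ?_
    exact Finset.sum_congr rfl fun j _ => by rw [hw_toReal j, smul_eq_mul]
  rw [hred]
  -- now purely finite computation
  set s : EuclideanSpace ℝ (Fin d) := ∑ i, p i • z i with hsdef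
  have hst : ∀ t, s t = ∑ i, p i * z i t := by
    intro t
    rw [hsdef, aux_sum_apply]
    exact Finset.sum_congr rfl fun i _ => by rw [PiLp.smul_apply, smul_eq_mul]
  have hHt : ∀ j t, H j t = c t + (1 / (n : ℝ)) * ∑ k, z (j k) t := by
    intro j t
    simp only [hHdef]
    rw [PiLp.add_apply, PiLp.smul_apply, smul_eq_mul, aux_sum_apply]
  have hmt : ∀ t, m t = c t + s t := by
    intro t
    rw [hmean, aux_sum_apply]
    have h1 : ∀ j : Fin n → Fin N,
        ((∏ k, p (j k)) • H j) t
          = (∏ k, p (j k)) * c t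
            + (1 / (n : ℝ)) * ∑ k, (∏ k', p (j k')) * z (j k) t := by
      intro j
      rw [PiLp.smul_apply, smul_eq_mul, hHt j t, mul_add]
      congr 1
      rw [← Finset.mul_sum]
      ring
    rw [Finset.sum_congr rfl fun j _ => h1 j, Finset.sum_add_distrib, ← Finset.sum_mul,
      aux_sum_W hsum, one_mul]
    congr 1
    rw [← Finset.mul_sum, Finset.sum_comm]
    have h2 : ∀ k : Fin n,
        ∑ j : Fin n → Fin N, (∏ k', p (j k')) * z (j k) t = s t := by
      intro k
      rw [aux_marg hsum k (fun i => z i t), hst]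
    rw [Finset.sum_congr rfl fun k _ => h2 k, Finset.sum_const, Finset.card_univ,
      Fintype.card_fin, nsmul_eq_mul]
    field_simp
  have hr0 : ∀ t, ∑ i, p i * (z i t - s t) = 0 := by
    intro t
    have h1 : ∀ i, p i * (z i t - s t) = p i * z i t - s t * p i := fun i => by ring
    rw [Finset.sum_congr rfl fun i _ => h1 i, Finset.sum_sub_distrib, ← Finset.mul_sum,
      hsum, ← hst]
    ring
  have hcoord : ∀ j t, (H j - m) t = (1 / (n : ℝ)) * ∑ k, (z (j k) t - s t) := by
    intro j t
    rw [PiLp.sub_apply, hHt, hmt, Finset.sum_sub_distrib, Finset.sum_const,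
      Finset.card_univ, Fintype.card_fin, nsmul_eq_mul]
    field_simp
    ring
  -- step 1: expand norm into coordinates and swap sums
  have step1 : ∑ j : Fin n → Fin N, (∏ k, p (j k)) * ‖H j - m‖ ^ 2
      = ∑ t : Fin d, ∑ j : Fin n → Fin N, (∏ k, p (j k)) * ((H j - m) t) ^ 2 := by
    have h1 : ∀ j : Fin n → Fin N, (∏ k, p (j k)) * ‖H j - m‖ ^ 2
        = ∑ t : Fin d, (∏ k, p (j k)) * ((H j - m) t) ^ 2 := by
      intro j
      rw [aux_norm_sq, Finset.mul_sum]
    rw [Finset.sum_congr rfl fun j _ => h1 j, Finset.sum_comm]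
  have step2 : ∀ t : Fin d,
      ∑ j : Fin n → Fin N, (∏ k, p (j k)) * ((H j - m) t) ^ 2
        = (1 / (n : ℝ)) * ∑ i, p i * (z i t - s t) ^ 2 := by
    intro t
    have h1 : ∀ j : Fin n → Fin N, (∏ k, p (j k)) * ((H j - m) t) ^ 2
        = (1 / (n : ℝ)) ^ 2 * ((∏ k, p (j k)) * (∑ k, (z (j k) t - s t)) ^ 2) := by
      intro j
      rw [hcoord j t]
      ring
    rw [Finset.sum_congr rfl fun j _ => h1 j, ← Finset.mul_sum,
      aux_var hsum (fun i => z i t - s t) (hr0 t)]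
    field_simp
  have step3 : ∀ t : Fin d,
      ∑ i, p i * (z i t - s t) ^ 2 ≤ ∑ i, p i * z i t ^ 2 := by
    intro t
    have h := aux_second_moment hsum (fun i => (hp i).le) (fun i => z i t)
    rw [← hst t] at h
    exact h
  have hnormz : ∀ i, ‖z i‖ ^ 2 = (p i)⁻¹ ^ 2 * ‖u i‖ ^ 2 := by
    intro i
    rw [hzdef]
    rw [norm_smul, mul_pow, Real.norm_eq_abs, abs_of_pos (inv_pos.mpr (hp i))]
  have hub : ∀ i, ‖u i‖ ^ 2 ≤ (L i) ^ 2 * ‖θ - θhat‖ ^ 2 := by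
    intro i
    have h' : ‖u i‖ ≤ L i * ‖θ - θhat‖ := by
      rw [hu]
      exact hLip i θ θhat
    calc ‖u i‖ ^ 2 ≤ (L i * ‖θ - θhat‖) ^ 2 := pow_le_pow_left₀ (norm_nonneg _) h' 2
      _ = (L i) ^ 2 * ‖θ - θhat‖ ^ 2 := by ring
  -- assemble
  have hbound : ∑ j : Fin n → Fin N, (∏ k, p (j k)) * ‖H j - m‖ ^ 2
      ≤ (1 / (n : ℝ)) * (‖θ - θhat‖ ^ 2 * ∑ i, (L i) ^ 2 / p i) := by
    rw [step1, Finset.sum_congr rfl fun t _ => step2 t, ← Finset.mul_sum]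
    have h1 : ∑ t : Fin d, ∑ i, p i * (z i t - s t) ^ 2
        ≤ ∑ t : Fin d, ∑ i, p i * z i t ^ 2 :=
      Finset.sum_le_sum fun t _ => step3 t
    have h2 : ∑ t : Fin d, ∑ i, p i * z i t ^ 2
        = ∑ i, p i * ‖z i‖ ^ 2 := by
      rw [Finset.sum_comm]
      refine Finset.sum_congr rfl fun i _ => ?_
      rw [aux_norm_sq, Finset.mul_sum]
    have h3 : ∑ i, p i * ‖z i‖ ^ 2 ≤ ‖θ - θhat‖ ^ 2 * ∑ i, (L i) ^ 2 / p i := by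
      rw [Finset.mul_sum]
      refine Finset.sum_le_sum fun i _ => ?_
      rw [hnormz i]
      have hpi := hp i
      have : p i * ((p i)⁻¹ ^ 2 * ‖u i‖ ^ 2) = ‖u i‖ ^ 2 / p i := by
        field_simp
      rw [this]
      calc ‖u i‖ ^ 2 / p i ≤ ((L i) ^ 2 * ‖θ - θhat‖ ^ 2) / p i := by
            gcongr
            exact hub i
        _ = ‖θ - θhat‖ ^ 2 * ((L i) ^ 2 / p i) := by ring
    calc (1 / (n : ℝ)) * ∑ t : Fin d, ∑ i, p i * (z i t - s t) ^ 2
        ≤ (1 / (n : ℝ)) * ∑ i, p i * ‖z i‖ ^ 2 := by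
          refine mul_le_mul_of_nonneg_left ?_ (by positivity)
          rw [← h2]
          exact h1
      _ ≤ (1 / (n : ℝ)) * (‖θ - θhat‖ ^ 2 * ∑ i, (L i) ^ 2 / p i) :=
          mul_le_mul_of_nonneg_left h3 (by positivity)
  have hlast : (1 / (n : ℝ)) * (‖θ - θhat‖ ^ 2 * ∑ i, (L i) ^ 2 / p i) < V₀ := by
    set B := ‖θ - θhat‖ ^ 2 * ∑ i, (L i) ^ 2 / p i with hB
    have hBnn : 0 ≤ B := by
      rw [hB]
      refine mul_nonneg (by positivity) (Finset.sum_nonneg fun i _ => ?_)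
      exact div_nonneg (sq_nonneg _) (hp i).le
    have h6 : (1 / V₀ * ‖θ - θhat‖ ^ 2 * ∑ i, (L i) ^ 2 / p i) * V₀ < (n : ℝ) * V₀ :=
      mul_lt_mul_of_pos_right hn_big hV₀
    have h5 : B < (n : ℝ) * V₀ := by
      have hV₀' : V₀ ≠ 0 := ne_of_gt hV₀
      calc B = (1 / V₀ * ‖θ - θhat‖ ^ 2 * ∑ i, (L i) ^ 2 / p i) * V₀ := by
            rw [hB]; field_simp
        _ < (n : ℝ) * V₀ := h6
    rw [div_mul_eq_mul_div, one_mul, div_lt_iff₀ npos]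
    linarith [h5]
  exact lt_of_le_of_lt hbound hlast
end
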